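/- Let A be an associative ring containing elements ω_{ab} (for a < b in a totally ordered index set) of a common degree, satisfying ω_{ab}² = 0 and ω_{ap}ω_{bp} = ω_{ab}(ω_{bp} − ω_{ap}) for a < b < p. Then for any sequence j_1 < j_2 < ⋯ < j_p < j with p ≥ 2, setting J' = (j_2,…,j_p,j), one has ω_{j_1 j}·ω_{j_2 j}⋯ω_{j_p j} = Σ_I (−1)^{r(I)} ω_{i_1 j_2}·ω_{i_2 j_3}⋯ω_{i_{p−1} j_p}·ω_{i_p j}, where I = (i_1,…,i_p) runs over the 2^{p−1} J-modifications and r(I) is the number of repetitions in I. -/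

import Mathlib

/-- The `J`-modification of the sequence `j` determined by the set `S` of positions where the
new value `j s` is taken (at positions not in `S`, the previous value repeats):
`i_0 = j_0` and `i_s = j s` if `s ∈ S`, `i_s = i_{s-1}` otherwise. -/
def modSeq {ι : Type*} (j : ℕ → ι) (S : Finset ℕ) : ℕ → ι
  | 0 => j 0
  | s + 1 => if s + 1 ∈ S then j (s + 1) else modSeq j S s

theorem modSeq_succ {ι : Type*} (j : ℕ → ι) (S : Finset ℕ) (s : ℕ) :
    modSeq j S (s + 1) = if s + 1 ∈ S then j (s + 1) else modSeq j S s := rfl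

def idxSeq (S : Finset ℕ) : ℕ → ℕ
  | 0 => 0
  | s + 1 => if s + 1 ∈ S then s + 1 else idxSeq S s

theorem idxSeq_le (S : Finset ℕ) (s : ℕ) : idxSeq S s ≤ s := by
  induction s with
  | zero => simp [idxSeq]
  | succ s ih =>
    rw [idxSeq]
    split
    · exact le_rfl
    · exact Nat.le_succ_of_le ih

theorem modSeq_eq_idx {ι : Type*} (j : ℕ → ι) (S : Finset ℕ) (s : ℕ) :
    modSeq j S s = j (idxSeq S s) := by
  induction s with
  | zero => rfl
  | succ s ih => rw [modSeq_succ, idxSeq]; split <;> simp [ih]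

theorem modSeq_shift_one {ι : Type*} (j : ℕ → ι) (S' : Finset ℕ) (s : ℕ) :
    modSeq j (insert 1 (S'.image (· + 1))) (s + 1) = modSeq (fun t => j (t + 1)) S' s := by
  induction s with
  | zero => simp [modSeq]
  | succ s ih =>
    have hmem : (s + 1 + 1 ∈ insert 1 (S'.image (· + 1))) ↔ s + 1 ∈ S' := by
      simp only [Finset.mem_insert, Finset.mem_image]
      constructor
      · rintro (h | ⟨a, ha, h⟩)
        · omega
        · have : a = s + 1 := by omega
          exact this ▸ ha
      · intro h; exact Or.inr ⟨s + 1, h, rfl⟩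
    conv_lhs => rw [modSeq_succ]
    conv_rhs => rw [modSeq_succ]
    by_cases h : s + 1 ∈ S'
    · rw [if_pos (hmem.mpr h), if_pos h]
    · rw [if_neg (fun hc => h (hmem.mp hc)), if_neg h, ih]

theorem modSeq_shift_zero {ι : Type*} (j : ℕ → ι) (S' : Finset ℕ) (h0 : 0 ∉ S') (s : ℕ) :
    modSeq j (S'.image (· + 1)) (s + 1)
      = modSeq (fun t => if t = 0 then j 0 else j (t + 1)) S' s := by
  have hmem : ∀ t : ℕ, (t + 1 ∈ S'.image (· + 1)) ↔ t ∈ S' := by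
    intro t
    simp only [Finset.mem_image]
    constructor
    · rintro ⟨a, ha, h⟩
      have : a = t := by omega
      exact this ▸ ha
    · intro h; exact ⟨t, h, rfl⟩
  induction s with
  | zero =>
    rw [modSeq_succ, if_neg (fun hc => h0 ((hmem 0).mp hc))]
    rfl
  | succ s ih =>
    conv_lhs => rw [modSeq_succ]
    conv_rhs => rw [modSeq_succ]
    by_cases h : s + 1 ∈ S'
    · rw [if_pos ((hmem (s+1)).mpr h), if_pos h, if_neg (Nat.succ_ne_zero s)]
    · rw [if_neg (fun hc => h ((hmem (s+1)).mp hc)), if_neg h, ih]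

theorem list_prod_range_succ_left {M : Type*} [Monoid M] (f : ℕ → M) (n : ℕ) :
    ((List.range (n + 1)).map f).prod = f 0 * ((List.range n).map (fun s => f (s + 1))).prod := by
  rw [List.range_succ_eq_map]
  simp [List.map_map, Function.comp_def]

theorem image_sub_add (S : Finset ℕ) (h : ∀ x ∈ S, 1 ≤ x) :
    (S.image (· - 1)).image (· + 1) = S := by
  ext x
  simp only [Finset.mem_image]
  constructor
  · rintro ⟨a, ⟨b, hb, rfl⟩, rfl⟩
    have := h b hb
    simpa [Nat.sub_add_cancel this] using hb
  · intro hx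
    exact ⟨x - 1, ⟨x, hx, rfl⟩, Nat.sub_add_cancel (h x hx)⟩

theorem image_add_sub (S : Finset ℕ) : (S.image (· + 1)).image (· - 1) = S := by
  ext x
  simp only [Finset.mem_image]
  constructor
  · rintro ⟨a, ⟨b, hb, rfl⟩, rfl⟩
    simpa using hb
  · intro hx
    exact ⟨x + 1, ⟨x, hx, rfl⟩, rfl⟩

theorem sum_powerset_shift {M : Type*} [AddCommMonoid M] (a b : ℕ) (f : Finset ℕ → M) :
    ∑ S ∈ (Finset.Ico (a + 1) (b + 1)).powerset, f S
      = ∑ S ∈ (Finset.Ico a b).powerset, f (S.image (· + 1)) := by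
  refine Finset.sum_nbij' (fun S => S.image (· - 1)) (fun S => S.image (· + 1)) ?_ ?_ ?_ ?_ ?_
  · intro S hS
    rw [Finset.mem_powerset] at *
    intro x hx
    obtain ⟨y, hy, rfl⟩ := Finset.mem_image.mp hx
    have := Finset.mem_Ico.mp (hS hy)
    exact Finset.mem_Ico.mpr (by omega)
  · intro S hS
    rw [Finset.mem_powerset] at *
    intro x hx
    obtain ⟨y, hy, rfl⟩ := Finset.mem_image.mp hx
    have := Finset.mem_Ico.mp (hS hy)
    exact Finset.mem_Ico.mpr (by omega)
  · intro S hS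
    rw [Finset.mem_powerset] at hS
    exact image_sub_add S (fun x hx => by have := Finset.mem_Ico.mp (hS hx); omega)
  · intro S _
    exact image_add_sub S
  · intro S hS
    rw [Finset.mem_powerset] at hS
    congr 1
    exact (image_sub_add S (fun x hx => by have := Finset.mem_Ico.mp (hS hx); omega)).symm

theorem mul_neg_one_pow_mul {A : Type*} [Ring A] (m : ℕ) (a b : A) :
    a * ((-1) ^ m * b) = (-1) ^ m * (a * b) := by
  rcases Nat.even_or_odd m with h | h
  · rw [h.neg_one_pow]; simp
  · rw [h.neg_one_pow]; simp [neg_mul, mul_neg]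

theorem key {ι : Type*} [LinearOrder ι] {A : Type*} [Ring A] (ω : ι → ι → A)
    (hrel : ∀ a b c : ι, a < b → b < c → ω a c * ω b c = ω a b * (ω b c - ω a c)) :
    ∀ (n : ℕ) (j : ℕ → ι) (jt : ι),
      (∀ s t : ℕ, s < t → t < n + 2 → j s < j t) → (∀ s : ℕ, s < n + 2 → j s < jt) →
      ((List.range (n + 2)).map (fun s => ω (j s) jt)).prod =
        ∑ S ∈ (Finset.Ico 1 (n + 2)).powerset,
          (-1 : A) ^ (n + 1 - S.card) *
            ((List.range (n + 2)).map
              (fun s => ω (modSeq j S s) (if s + 1 < n + 2 then j (s + 1) else jt))).prod := by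
  intro n
  induction n with
  | zero =>
    intro j jt hmono hjt
    have h01 : j 0 < j 1 := hmono 0 1 one_pos (by omega)
    have h1t : j 1 < jt := hjt 1 (by omega)
    rw [show Finset.Ico 1 2 = insert 1 ∅ from rfl,
      Finset.sum_powerset_insert (by simp), Finset.powerset_empty,
      Finset.sum_singleton, Finset.sum_singleton]
    simp only [show List.range 2 = [0, 1] from rfl, List.map_cons, List.map_nil,
      List.prod_cons, List.prod_nil, Finset.card_empty, Finset.card_singleton]
    norm_num [modSeq]
    rw [hrel (j 0) (j 1) jt h01 h1t]
    noncomm_ring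
  | succ n ih =>
    intro j jt hmono hjt
    have h01 : j 0 < j 1 := hmono 0 1 one_pos (by omega)
    have h1t : j 1 < jt := hjt 1 (by omega)
    have hmono1 : ∀ s t : ℕ, s < t → t < n + 2 → j (s + 1) < j (t + 1) :=
      fun s t hst htn => hmono (s + 1) (t + 1) (by omega) (by omega)
    have hjt1 : ∀ s : ℕ, s < n + 2 → j (s + 1) < jt := fun s hs => hjt (s + 1) (by omega)
    have E1 := ih (fun t => j (t + 1)) jt hmono1 hjt1
    have hmono2 : ∀ s t : ℕ, s < t → t < n + 2 →
        (fun t => if t = 0 then j 0 else j (t + 1)) s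
          < (fun t => if t = 0 then j 0 else j (t + 1)) t := by
      intro s t hst htn
      simp only
      rcases Nat.eq_zero_or_pos s with rfl | hs
      · rw [if_pos rfl, if_neg (by omega : ¬ t = 0)]
        exact hmono 0 (t + 1) (by omega) (by omega)
      · rw [if_neg (by omega), if_neg (by omega)]
        exact hmono (s + 1) (t + 1) (by omega) (by omega)
    have hjt2 : ∀ s : ℕ, s < n + 2 → (fun t => if t = 0 then j 0 else j (t + 1)) s < jt := by
      intro s hs
      simp only
      split
      · exact hjt 0 (by omega)
      · exact hjt (s + 1) (by omega)
    have E2 := ih (fun t => if t = 0 then j 0 else j (t + 1)) jt hmono2 hjt2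
    -- the two pointwise product identities
    have hprodB : ∀ S : Finset ℕ,
        ((List.range (n + 3)).map (fun s => ω (modSeq j (insert 1 (S.image (· + 1))) s)
            (if s + 1 < n + 3 then j (s + 1) else jt))).prod
          = ω (j 0) (j 1) * ((List.range (n + 2)).map
              (fun s => ω (modSeq (fun t => j (t + 1)) S s)
                (if s + 1 < n + 2 then j (s + 1 + 1) else jt))).prod := by
      intro S
      rw [show (n + 3) = (n + 2) + 1 from rfl, list_prod_range_succ_left]
      refine congrArg₂ (· * ·) ?_ (congrArg List.prod (List.map_congr_left ?_))
      · have h1 : (0 : ℕ) + 1 < n + 2 + 1 := by omega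
        simp [h1, modSeq]
      · intro s hs
        rw [List.mem_range] at hs
        rw [modSeq_shift_one j S s]
        by_cases h : s + 1 < n + 2
        · rw [if_pos (by omega : s + 1 + 1 < n + 2 + 1), if_pos h]
        · rw [if_neg (by omega : ¬ s + 1 + 1 < n + 2 + 1), if_neg h]
    have hprodA : ∀ S : Finset ℕ, 0 ∉ S →
        ((List.range (n + 3)).map (fun s => ω (modSeq j (S.image (· + 1)) s)
            (if s + 1 < n + 3 then j (s + 1) else jt))).prod
          = ω (j 0) (j 1) * ((List.range (n + 2)).map
              (fun s => ω (modSeq (fun t => if t = 0 then j 0 else j (t + 1)) S s)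
                (if s + 1 < n + 2 then (if s + 1 = 0 then j 0 else j (s + 1 + 1)) else jt))).prod := by
      intro S h0
      rw [show (n + 3) = (n + 2) + 1 from rfl, list_prod_range_succ_left]
      refine congrArg₂ (· * ·) ?_ (congrArg List.prod (List.map_congr_left ?_))
      · have h1 : (0 : ℕ) + 1 < n + 2 + 1 := by omega
        simp [h1, modSeq]
      · intro s hs
        rw [List.mem_range] at hs
        rw [modSeq_shift_zero j S h0 s]
        by_cases h : s + 1 < n + 2
        · rw [if_pos (by omega : s + 1 + 1 < n + 2 + 1), if_pos h,
            if_neg (Nat.succ_ne_zero s)]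
        · rw [if_neg (by omega : ¬ s + 1 + 1 < n + 2 + 1), if_neg h]
    -- expansions of list products
    have hL : ((List.range (n + 3)).map (fun s => ω (j s) jt)).prod
        = (ω (j 0) jt * ω (j 1) jt) * ((List.range (n + 1)).map (fun s => ω (j (s + 2)) jt)).prod := by
      rw [show (n + 3) = (n + 2) + 1 from rfl, list_prod_range_succ_left,
        show (n + 2) = (n + 1) + 1 from rfl, list_prod_range_succ_left, ← mul_assoc]
    have hP1 : ((List.range (n + 2)).map (fun s => ω (j (s + 1)) jt)).prod
        = ω (j 1) jt * ((List.range (n + 1)).map (fun s => ω (j (s + 2)) jt)).prod := by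
      rw [show (n + 2) = (n + 1) + 1 from rfl, list_prod_range_succ_left]
    have hP2 : ((List.range (n + 2)).map (fun s => ω (if s = 0 then j 0 else j (s + 1)) jt)).prod
        = ω (j 0) jt * ((List.range (n + 1)).map (fun s => ω (j (s + 2)) jt)).prod := by
      rw [show (n + 2) = (n + 1) + 1 from rfl, list_prod_range_succ_left]
      simp [show ∀ s : ℕ, s + 1 + 1 = s + 2 from fun s => rfl]
    -- normalize the goal
    simp only [show n + 1 + 2 = n + 3 from rfl, show n + 1 + 1 = n + 2 from rfl]
    rw [show Finset.Ico 1 (n + 3) = insert 1 (Finset.Ico (1 + 1) ((n + 2) + 1)) from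
        (Finset.insert_Ico_add_one_left_eq_Ico (by omega)).symm,
      Finset.sum_powerset_insert (by simp),
      sum_powerset_shift 1 (n + 2), sum_powerset_shift 1 (n + 2)]
    rw [hL, hrel (j 0) (j 1) jt h01 h1t]
    have hexpand : (ω (j 0) (j 1) * (ω (j 1) jt - ω (j 0) jt)) *
          ((List.range (n + 1)).map (fun s => ω (j (s + 2)) jt)).prod
        = ω (j 0) (j 1) * ((List.range (n + 2)).map (fun s => ω (j (s + 1)) jt)).prod
          - ω (j 0) (j 1) *
            ((List.range (n + 2)).map (fun s => ω (if s = 0 then j 0 else j (s + 1)) jt)).prod := by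
      rw [hP1, hP2]
      noncomm_ring
    rw [hexpand, E1, E2, Finset.mul_sum, Finset.mul_sum, sub_eq_add_neg,
      ← Finset.sum_neg_distrib, add_comm]
    congr 1
    · -- the 1 ∉ S part
      refine Finset.sum_congr rfl ?_
      intro S hS
      have hS' := Finset.mem_powerset.mp hS
      have h0S : 0 ∉ S := fun h => by have := Finset.mem_Ico.mp (hS' h); omega
      have hcard : (S.image (· + 1)).card = S.card :=
        Finset.card_image_of_injective _ (fun a b h => by omega)
      have hkle : S.card ≤ n + 1 := by
        have h2 := Finset.card_le_card hS'
        rwa [Nat.card_Ico] at h2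
      rw [hprodA S h0S, hcard, show n + 2 - S.card = (n + 1 - S.card) + 1 from by omega,
        pow_succ, mul_neg_one_pow_mul, mul_neg_one, neg_mul]
    · -- the 1 ∈ S part
      refine Finset.sum_congr rfl ?_
      intro S hS
      have hS' := Finset.mem_powerset.mp hS
      have h0S : 0 ∉ S := fun h => by have := Finset.mem_Ico.mp (hS' h); omega
      have hni : 1 ∉ S.image (· + 1) := by
        intro hc
        obtain ⟨a, ha, hae⟩ := Finset.mem_image.mp hc
        have : a = 0 := by omega
        exact h0S (this ▸ ha)
      have hcard : (insert 1 (S.image (· + 1))).card = S.card + 1 := by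
        rw [Finset.card_insert_of_notMem hni,
          Finset.card_image_of_injective _ (fun a b h => by omega)]
      rw [hprodB S, hcard, show n + 2 - (S.card + 1) = n + 1 - S.card from by omega,
        mul_neg_one_pow_mul]

theorem rep_card {ι : Type*} [LinearOrder ι] (j : ℕ → ι) (p : ℕ)
    (hmono : ∀ s t : ℕ, s < t → t < p → j s < j t) (S : Finset ℕ)
    (hS : S ⊆ Finset.Ico 1 p) :
    ((Finset.Ico 1 p).filter (fun s => modSeq j S s = modSeq j S (s - 1))).card
      = p - 1 - S.card := by
  have hiff : ∀ s ∈ Finset.Ico 1 p, (modSeq j S s = modSeq j S (s - 1)) ↔ s ∉ S := by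
    intro s hs
    rw [Finset.mem_Ico] at hs
    obtain ⟨t, rfl⟩ : ∃ t, s = t + 1 := ⟨s - 1, by omega⟩
    rw [show t + 1 - 1 = t from rfl]
    constructor
    · intro he hmem
      rw [modSeq_succ, if_pos hmem, modSeq_eq_idx] at he
      have hlt : j (idxSeq S t) < j (t + 1) :=
        hmono _ _ (by have := idxSeq_le S t; omega) (by omega)
      exact ne_of_gt hlt he
    · intro hmem
      rw [modSeq_succ, if_neg hmem]
  rw [Finset.filter_congr hiff, Finset.filter_not, Finset.filter_mem_eq_inter,
    Finset.inter_eq_right.mpr hS, Finset.card_sdiff_of_subset hS, Nat.card_Ico]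

/-- In a ring with elements `ω a b` (for `a < b`) satisfying `ω a b ^ 2 = 0` and
the three-term relation `ω a p * ω b p = ω a b * (ω b p - ω a p)` for `a < b < p`, for any
increasing sequence `j_0 < j_1 < ⋯ < j_{p-1} < jt` with `p ≥ 2` one has
`ω (j 0) jt ⋯ ω (j (p-1)) jt = Σ_I (-1)^{r(I)} ω (i_0) (j 1) ⋯ ω (i_{p-2}) (j (p-1)) ω (i_{p-1}) jt`,
where `I` runs over the `2^{p-1}` `J`-modifications (indexed by subsets `S ⊆ {1,…,p-1}`)
and `r(I)` is the number of repetitions in `I`. -/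
theorem stmt13 {ι : Type*} [LinearOrder ι] {A : Type*} [Ring A] (ω : ι → ι → A)
    (hsq : ∀ a b : ι, a < b → ω a b * ω a b = 0)
    (hrel : ∀ a b c : ι, a < b → b < c → ω a c * ω b c = ω a b * (ω b c - ω a c))
    (p : ℕ) (hp : 2 ≤ p) (j : ℕ → ι) (jt : ι)
    (hmono : ∀ s t : ℕ, s < t → t < p → j s < j t)
    (hjt : ∀ s : ℕ, s < p → j s < jt) :
    ((List.range p).map (fun s => ω (j s) jt)).prod =
      ∑ S ∈ (Finset.Ico 1 p).powerset,
        (-1 : A) ^ (((Finset.Ico 1 p).filter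
            (fun s => modSeq j S s = modSeq j S (s - 1))).card) *
          ((List.range p).map
            (fun s => ω (modSeq j S s) (if s + 1 < p then j (s + 1) else jt))).prod := by
  obtain ⟨n, rfl⟩ : ∃ n, p = n + 2 := ⟨p - 2, by omega⟩
  rw [key ω hrel n j jt hmono hjt]
  refine Finset.sum_congr rfl ?_
  intro S hS
  rw [rep_card j (n + 2) hmono S (Finset.mem_powerset.mp hS),
    show n + 2 - 1 = n + 1 from rfl]
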